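/- For every n ∈ ℕ and all x, y ∈ ℂ, the Jackson q-integral of the q-Frobenius–Euler polynomial satisfies ∫_x^{x+y} H_{n,q}(u|λ) d_q u = (1/[n+1]_q) · ( H_{n+1,q}(x+y|λ) − H_{n+1,q}(x|λ) ). -/

import Mathlib

open Finset Polynomial

/-- The `q`-integer `[n]_q = (1 - q^n)/(1 - q)` viewed in `ℂ`. -/
noncomputable def qInt (q : ℝ) (n : ℕ) : ℂ := (1 - (q : ℂ) ^ n) / (1 - (q : ℂ))

/-- The `q`-factorial `[n]_q! = ∏_{j=1}^n [j]_q`. -/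
noncomputable def qFact (q : ℝ) (n : ℕ) : ℂ := ∏ j ∈ Finset.range n, qInt q (j + 1)

/-- The `q`-binomial coefficient `[n]_q!/([k]_q! [n-k]_q!)`. -/
noncomputable def qBinom (q : ℝ) (n k : ℕ) : ℂ := qFact q n / (qFact q k * qFact q (n - k))

/-- The formal `q`-exponential `e_q(t) = ∑ t^n/[n]_q!` in `ℂ[x][[t]]`. -/
noncomputable def qExp (q : ℝ) : PowerSeries (Polynomial ℂ) :=
  PowerSeries.mk fun n => Polynomial.C (1 / qFact q n)

/-- The formal series `e_q(xt) = ∑ x^n t^n/[n]_q!` in `ℂ[x][[t]]`. -/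
noncomputable def qExpX (q : ℝ) : PowerSeries (Polynomial ℂ) :=
  PowerSeries.mk fun n => Polynomial.C (1 / qFact q n) * Polynomial.X ^ n

/-- `H : ℕ → ℂ[x]` is the family of `q`-Frobenius-Euler polynomials `H_{n,q}(x|λ)`:
`(∑ H_n t^n/[n]_q!) ⬝ (e_q(t) - λ) = (1 - λ) e_q(xt)` in `ℂ[x][[t]]`. -/
def IsqFrobeniusEuler (q : ℝ) (lam : ℂ) (H : ℕ → Polynomial ℂ) : Prop :=
  (PowerSeries.mk fun n => Polynomial.C (1 / qFact q n) * H n) *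
      (qExp q - PowerSeries.C (Polynomial.C lam)) =
    PowerSeries.C (Polynomial.C (1 - lam)) * qExpX q

/-- The Jackson `q`-integral `∫₀^z p(u) d_q u = (1-q) z ∑_{a≥0} q^a p(q^a z)`. -/
noncomputable def jacksonIntegral (q : ℝ) (p : Polynomial ℂ) (z : ℂ) : ℂ :=
  (1 - (q : ℂ)) * z * ∑' a : ℕ, (q : ℂ) ^ a * p.eval ((q : ℂ) ^ a * z)

lemma qC_ne_one {q : ℝ} (hq0 : 0 < q) (hq1 : q < 1) {m : ℕ} (hm : m ≠ 0) :
    (q : ℂ) ^ m ≠ 1 := by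
  have h : q ^ m < 1 := pow_lt_one₀ hq0.le hq1 hm
  intro he
  have : ((q ^ m : ℝ) : ℂ) = ((1 : ℝ) : ℂ) := by push_cast; simpa using he
  have := Complex.ofReal_injective this
  linarith
lemma qInt_ne_zero {q : ℝ} (hq0 : 0 < q) (hq1 : q < 1) {m : ℕ} (hm : m ≠ 0) :
    qInt q m ≠ 0 := by
  have h1 : (1 : ℂ) - (q:ℂ)^m ≠ 0 := sub_ne_zero.mpr (Ne.symm (qC_ne_one hq0 hq1 hm))
  have h2 : (1 : ℂ) - (q:ℂ) ≠ 0 := by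
    simpa using sub_ne_zero.mpr (Ne.symm (by simpa using qC_ne_one hq0 hq1 (m := 1) one_ne_zero))
  exact div_ne_zero h1 h2
lemma qFact_ne_zero {q : ℝ} (hq0 : 0 < q) (hq1 : q < 1) (n : ℕ) : qFact q n ≠ 0 :=
  Finset.prod_ne_zero_iff.mpr fun j _ => qInt_ne_zero hq0 hq1 (Nat.succ_ne_zero j)
lemma main_eq {q : ℝ} (hq0 : 0 < q) (hq1 : q < 1) {lam : ℂ} (hlam : lam ≠ 1)
    {H : ℕ → Polynomial ℂ} (hH : IsqFrobeniusEuler q lam H) :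
    (PowerSeries.mk fun n => Polynomial.C (1 / qFact q n) * H n) =
      (PowerSeries.mk fun n => Polynomial.C ((1 / qFact q n) * (H n).eval 0)) * qExpX q := by
  classical
  set ψ : Polynomial ℂ →+* Polynomial ℂ :=
    (Polynomial.C.comp (Polynomial.evalRingHom (0:ℂ))) with hψ
  have hψC : ∀ a : ℂ, ψ (Polynomial.C a) = Polynomial.C a := by
    intro a; simp [hψ]
  have hH' : (PowerSeries.mk fun n => Polynomial.C (1 / qFact q n) * H n) *
      (qExp q - PowerSeries.C (Polynomial.C lam)) =
    PowerSeries.C (Polynomial.C (1 - lam)) * qExpX q := hH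
  have key := congrArg (PowerSeries.map ψ) hH'
  have hmapA : PowerSeries.map ψ (PowerSeries.mk fun n => Polynomial.C (1 / qFact q n) * H n)
      = PowerSeries.mk fun n => Polynomial.C ((1 / qFact q n) * (H n).eval 0) := by
    ext m
    simp [PowerSeries.coeff_map, hψ]
  have hmapE : PowerSeries.map ψ (qExp q - PowerSeries.C (Polynomial.C lam))
      = qExp q - PowerSeries.C (Polynomial.C lam) := by
    ext m
    simp only [map_sub, PowerSeries.coeff_map]
    by_cases hm : m = 0 <;> simp [qExp, hm, hψ, PowerSeries.coeff_C]
  have hmapX1 : PowerSeries.map ψ (qExpX q) = 1 := by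
    ext m
    rw [PowerSeries.coeff_map]
    by_cases hm : m = 0 <;> simp [qExpX, hm, hψ, qFact, PowerSeries.coeff_one]
  have hmapX : PowerSeries.map ψ (PowerSeries.C (Polynomial.C (1 - lam)) * qExpX q)
      = PowerSeries.C (Polynomial.C (1 - lam)) := by
    rw [map_mul, hmapX1, mul_one, PowerSeries.map_C, hψC]
  rw [map_mul, hmapA, hmapE, hmapX] at key
  -- key : hEmb * E = C(C(1-lam))
  have hEne : (qExp q - PowerSeries.C (Polynomial.C lam)) ≠ 0 := by
    intro h0
    have := congrArg (PowerSeries.constantCoeff) h0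
    simp only [map_sub, PowerSeries.constantCoeff_C, map_zero] at this
    have h1 : PowerSeries.constantCoeff (qExp q) = Polynomial.C 1 := by
      simp [qExp, ← PowerSeries.coeff_zero_eq_constantCoeff, qFact]
    rw [h1] at this
    have : (1 : ℂ) - lam = 0 := by
      have := congrArg (fun p => Polynomial.coeff p 0) this
      simpa [Polynomial.coeff_sub] using this
    exact hlam (sub_eq_zero.mp this).symm
  refine mul_right_cancel₀ hEne ?_
  rw [mul_assoc, mul_comm (qExpX q), ← mul_assoc, key]
  exact hH'
lemma coeffH {q : ℝ} (hq0 : 0 < q) (hq1 : q < 1) {lam : ℂ} (hlam : lam ≠ 1)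
    {H : ℕ → Polynomial ℂ} (hH : IsqFrobeniusEuler q lam H) (n j : ℕ) :
    (H n).coeff j = if j ≤ n then
      qFact q n / (qFact q (n - j) * qFact q j) * (H (n - j)).eval 0 else 0 := by
  classical
  have hm := main_eq hq0 hq1 hlam hH
  have h0 := congrArg (PowerSeries.coeff n) hm
  rw [PowerSeries.coeff_mk, PowerSeries.coeff_mul] at h0
  have h1 := congrArg (fun p => Polynomial.coeff p j) h0
  simp only [Polynomial.finset_sum_coeff, Polynomial.coeff_C_mul] at h1
  have h2 : (1 / qFact q n) * (H n).coeff j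
      = ∑ p ∈ Finset.HasAntidiagonal.antidiagonal n,
          ((1 / qFact q p.1) * (H p.1).eval 0) * ((1 / qFact q p.2) *
            (if j = p.2 then 1 else 0)) := by
    rw [h1]
    apply Finset.sum_congr rfl
    intro p _
    simp [qExpX, PowerSeries.coeff_mk, Polynomial.coeff_C_mul, Polynomial.coeff_X_pow,
      mul_assoc]
  by_cases hj : j ≤ n
  · have h3 : ∑ p ∈ Finset.HasAntidiagonal.antidiagonal n,
          ((1 / qFact q p.1) * (H p.1).eval 0) * ((1 / qFact q p.2) *
            (if j = p.2 then 1 else 0))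
        = (1 / qFact q (n - j)) * (H (n - j)).eval 0 * (1 / qFact q j) := by
      rw [Finset.sum_eq_single_of_mem (n - j, j)]
      · simp
      · simp [Finset.HasAntidiagonal.mem_antidiagonal, Nat.sub_add_cancel hj]
      · intro p hp hne
        have hpn : p.1 + p.2 = n := Finset.HasAntidiagonal.mem_antidiagonal.mp hp
        have : j ≠ p.2 := by
          intro he
          apply hne
          have : p.1 = n - j := by omega
          exact Prod.ext this he.symm
        simp [this]
    rw [h3] at h2
    rw [if_pos hj]
    have hn := qFact_ne_zero hq0 hq1 n
    have hnj := qFact_ne_zero hq0 hq1 (n - j)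
    have hjj := qFact_ne_zero hq0 hq1 j
    field_simp at h2 ⊢
    linear_combination h2
  · have h3 : ∑ p ∈ Finset.HasAntidiagonal.antidiagonal n,
          ((1 / qFact q p.1) * (H p.1).eval 0) * ((1 / qFact q p.2) *
            (if j = p.2 then 1 else 0)) = 0 := by
      apply Finset.sum_eq_zero
      intro p hp
      have hpn : p.1 + p.2 = n := Finset.HasAntidiagonal.mem_antidiagonal.mp hp
      have : j ≠ p.2 := by omega
      simp [this]
    rw [h3] at h2
    rw [if_neg hj]
    have hn := qFact_ne_zero hq0 hq1 n
    field_simp at h2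
    simpa using h2
lemma jackson_formula {q : ℝ} (hq0 : 0 < q) (hq1 : q < 1) (p : Polynomial ℂ) (z : ℂ)
    (N : ℕ) (hd : p.natDegree < N + 1) :
    jacksonIntegral q p z
      = ∑ k ∈ Finset.range (N + 1), p.coeff k * z ^ (k + 1) / qInt q (k + 1) := by
  have hnq : ‖(q:ℂ)‖ < 1 := by
    rw [Complex.norm_real, Real.norm_eq_abs, abs_of_pos hq0]; exact hq1
  have hnorm : ∀ k : ℕ, ‖(q:ℂ) ^ (k+1)‖ < 1 := by
    intro k
    rw [norm_pow]
    exact pow_lt_one₀ (norm_nonneg _) hnq (Nat.succ_ne_zero k)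
  have heval : ∀ a : ℕ, (q:ℂ)^a * p.eval ((q:ℂ)^a * z)
      = ∑ k ∈ Finset.range (N+1), p.coeff k * z^k * ((q:ℂ)^(k+1))^a := by
    intro a
    rw [Polynomial.eval_eq_sum_range' hd, Finset.mul_sum]
    apply Finset.sum_congr rfl
    intro k _
    ring
  unfold jacksonIntegral
  rw [tsum_congr heval, Summable.tsum_finsetSum
    (fun k _ => (summable_geometric_of_norm_lt_one (hnorm k)).mul_left (p.coeff k * z^k))]
  rw [Finset.mul_sum]
  apply Finset.sum_congr rfl
  intro k _
  rw [tsum_mul_left, tsum_geometric_of_norm_lt_one (hnorm k)]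
  have h1 : (1 : ℂ) - (q:ℂ)^(k+1) ≠ 0 := sub_ne_zero.mpr
    (Ne.symm (qC_ne_one hq0 hq1 (Nat.succ_ne_zero k)))
  have h2 : (1 : ℂ) - (q:ℂ) ≠ 0 := by
    simpa using sub_ne_zero.mpr (Ne.symm (by simpa using qC_ne_one hq0 hq1 (m := 1) one_ne_zero))
  rw [qInt]
  field_simp
  ring

/-- `∫_x^{x+y} H_{n,q}(u|λ) d_q u
      = (1/[n+1]_q)(H_{n+1,q}(x+y|λ) - H_{n+1,q}(x|λ))`. -/
theorem jacksonIntegral_qFrobeniusEuler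
    (q : ℝ) (hq0 : 0 < q) (hq1 : q < 1) (lam : ℂ) (hlam : lam ≠ 1)
    (H : ℕ → Polynomial ℂ) (hH : IsqFrobeniusEuler q lam H) (n : ℕ) (x y : ℂ) :
    jacksonIntegral q (H n) (x + y) - jacksonIntegral q (H n) x =
      (1 / qInt q (n + 1)) * ((H (n + 1)).eval (x + y) - (H (n + 1)).eval x) := by
  have hc := coeffH hq0 hq1 hlam hH
  have hdn : (H n).natDegree < n + 1 := Nat.lt_succ_of_le
    (Polynomial.natDegree_le_iff_coeff_eq_zero.mpr fun m hm => by
      rw [hc n m, if_neg (by omega)])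
  have hdn1 : (H (n+1)).natDegree < n + 2 := Nat.lt_succ_of_le
    (Polynomial.natDegree_le_iff_coeff_eq_zero.mpr fun m hm => by
      rw [hc (n+1) m, if_neg (by omega)])
  rw [jackson_formula hq0 hq1 _ _ n hdn, jackson_formula hq0 hq1 _ _ n hdn,
    Polynomial.eval_eq_sum_range' hdn1 (x + y), Polynomial.eval_eq_sum_range' hdn1 x,
    ← Finset.sum_sub_distrib, ← Finset.sum_sub_distrib, Finset.mul_sum,
    Finset.sum_range_succ' _ (n+1)]
  have hz : 1 / qInt q (n + 1) * ((H (n+1)).coeff 0 * (x+y)^0 - (H (n+1)).coeff 0 * x^0)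
      = 0 := by simp
  rw [hz, add_zero]
  apply Finset.sum_congr rfl
  intro k hk
  have hkn : k ≤ n := by simpa using Nat.lt_succ_iff.mp (Finset.mem_range.mp hk)
  rw [hc n k, if_pos hkn, hc (n+1) (k+1), if_pos (by omega)]
  have hnk1 : n + 1 - (k + 1) = n - k := by omega
  rw [hnk1]
  have e1 : qFact q (n+1) = qFact q n * qInt q (n+1) := Finset.prod_range_succ _ n
  have e2 : qFact q (k+1) = qFact q k * qInt q (k+1) := Finset.prod_range_succ _ k
  rw [e1, e2]
  have h1 := qFact_ne_zero hq0 hq1 n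
  have h2 := qFact_ne_zero hq0 hq1 k
  have h3 := qFact_ne_zero hq0 hq1 (n - k)
  have h4 := qInt_ne_zero hq0 hq1 (Nat.succ_ne_zero n)
  have h5 := qInt_ne_zero hq0 hq1 (Nat.succ_ne_zero k)
  field_simp
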